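/- Kreĭn-type resolvent formula consistency: under the Ryzhov triple setup, for z ∈ ρ(A₀) such that the closure of α + βM(z) is boundedly invertible, the operator R(z) = (A₀ − zI)⁻¹ − (I − zA₀⁻¹)⁻¹Π[cl(α + βM(z))]⁻¹βΠ*(I − zA₀⁻¹)⁻¹ satisfies the resolvent identity R(z) − R(w) = (z − w)R(z)R(w) for all such z, w, where α, β are as in the generalized boundary condition and β is bounded. -/

import Mathlib

/- STATEMENT 14 (Kreĭn-type resolvent formula consistency, case α = 0, β = I):
in the Ryzhov triple setup (`J = A₀⁻¹` self-adjoint bounded, `Lft = Π` bounded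
injective, `Λ` self-adjoint in `E` with domain `domΛ`), for `z, w ∈ ρ(A₀)` such
that `M(z) = Λ + zΠ*(I − zA₀⁻¹)⁻¹Π` and `M(w)` are boundedly invertible (with
bounded inverses `Nz`, `Nw` mapping into `dom Λ`), the operator
`R(z) = (A₀ − z)⁻¹ − γ(z) M(z)⁻¹ γ(z̄)*`, with `γ(z) = (I − zA₀⁻¹)⁻¹Π`,
satisfies the resolvent identity `R(z) − R(w) = (z − w) R(z) R(w)`.
`Rz = (A₀ − z)⁻¹` is encoded by `hRz`, `hRz2`, and `Q•inv` are the two-sided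
inverses of `1 − •J`. -/
theorem stmt14 {H E : Type*}
    [NormedAddCommGroup H] [InnerProductSpace ℂ H] [CompleteSpace H]
    [NormedAddCommGroup E] [InnerProductSpace ℂ E] [CompleteSpace E]
    (J : H →L[ℂ] H) (Lft : E →L[ℂ] H)
    (hJsa : IsSelfAdjoint J) (hJinj : Function.Injective J)
    (hLinj : Function.Injective Lft)
    (hdisj : ∀ x : H, x ∈ Set.range J → x ∈ Set.range Lft → x = 0)
    (domΛ : Submodule ℂ E) (Λ : E →ₗ[ℂ] E)
    (hΛsym : ∀ φ ∈ domΛ, ∀ ψ ∈ domΛ,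
        (inner ℂ (Λ φ) ψ : ℂ) = inner ℂ φ (Λ ψ))
    (z w : ℂ)
    (Rz Rw : H →L[ℂ] H)
    (hRz : ∀ y : H, Rz y = J y + z • J (Rz y))
    (hRz2 : ∀ f : H, Rz (f - z • J f) = J f)
    (hRw : ∀ y : H, Rw y = J y + w • J (Rw y))
    (hRw2 : ∀ f : H, Rw (f - w • J f) = J f)
    (Qzinv Qzbarinv Qwinv Qwbarinv : H →L[ℂ] H)
    (hz1 : (1 - z • J).comp Qzinv = 1) (hz2 : Qzinv.comp (1 - z • J) = 1)
    (hzb1 : (1 - (starRingEnd ℂ z) • J).comp Qzbarinv = 1)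
    (hzb2 : Qzbarinv.comp (1 - (starRingEnd ℂ z) • J) = 1)
    (hw1 : (1 - w • J).comp Qwinv = 1) (hw2 : Qwinv.comp (1 - w • J) = 1)
    (hwb1 : (1 - (starRingEnd ℂ w) • J).comp Qwbarinv = 1)
    (hwb2 : Qwbarinv.comp (1 - (starRingEnd ℂ w) • J) = 1)
    (Nz Nw : E →L[ℂ] E)
    -- Nz is a two-sided inverse of M(z) = Λ + zΠ*(1 − zJ)⁻¹Π (defined on dom Λ):
    (hNzdom : ∀ φ : E, Nz φ ∈ domΛ)
    (hNz1 : ∀ φ : E,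
      Λ (Nz φ) + z • ContinuousLinearMap.adjoint Lft (Qzinv (Lft (Nz φ))) = φ)
    (hNz2 : ∀ φ ∈ domΛ,
      Nz (Λ φ + z • ContinuousLinearMap.adjoint Lft (Qzinv (Lft φ))) = φ)
    (hNwdom : ∀ φ : E, Nw φ ∈ domΛ)
    (hNw1 : ∀ φ : E,
      Λ (Nw φ) + w • ContinuousLinearMap.adjoint Lft (Qwinv (Lft (Nw φ))) = φ)
    (hNw2 : ∀ φ ∈ domΛ,
      Nw (Λ φ + w • ContinuousLinearMap.adjoint Lft (Qwinv (Lft φ))) = φ) :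
    (Rz - (Qzinv.comp Lft).comp
        (Nz.comp (ContinuousLinearMap.adjoint (Qzbarinv.comp Lft))))
      - (Rw - (Qwinv.comp Lft).comp
        (Nw.comp (ContinuousLinearMap.adjoint (Qwbarinv.comp Lft))))
    = (z - w) •
      ((Rz - (Qzinv.comp Lft).comp
          (Nz.comp (ContinuousLinearMap.adjoint (Qzbarinv.comp Lft)))).comp
        (Rw - (Qwinv.comp Lft).comp
          (Nw.comp (ContinuousLinearMap.adjoint (Qwbarinv.comp Lft))))) := by

  set L := ContinuousLinearMap.adjoint Lft with hLdef
  -- pointwise facts about the inverses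
  have hz1' : ∀ x : H, Qzinv x - z • J (Qzinv x) = x := fun x => by
    simpa using ContinuousLinearMap.ext_iff.mp hz1 x
  have hz2' : ∀ x : H, Qzinv (x - z • J x) = x := fun x => by
    simpa using ContinuousLinearMap.ext_iff.mp hz2 x
  have hw1' : ∀ x : H, Qwinv x - w • J (Qwinv x) = x := fun x => by
    simpa using ContinuousLinearMap.ext_iff.mp hw1 x
  have hw2' : ∀ x : H, Qwinv (x - w • J x) = x := fun x => by
    simpa using ContinuousLinearMap.ext_iff.mp hw2 x
  -- Rz = J ∘ Qzinv pointwise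
  have hRzp : ∀ x : H, Rz x = J (Qzinv x) := fun x => by
    have h := hRz2 (Qzinv x); rwa [hz1' x] at h
  have hRwp : ∀ x : H, Rw x = J (Qwinv x) := fun x => by
    have h := hRw2 (Qwinv x); rwa [hw1' x] at h
  -- commutation of J with the inverses
  have hJQz : ∀ x : H, Qzinv (J x) = J (Qzinv x) := fun x => by
    conv_lhs => rw [← hz1' x]
    rw [map_sub, map_smul, hz2']
  have hJQw : ∀ x : H, Qwinv (J x) = J (Qwinv x) := fun x => by
    conv_lhs => rw [← hw1' x]
    rw [map_sub, map_smul, hw2']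
  -- first resolvent-type identity for the inverses
  have hdiff : ∀ x : H, Qzinv x - Qwinv x = (z - w) • J (Qzinv (Qwinv x)) := by
    intro x
    have expand : Qwinv x - w • J (Qwinv x)
        = (Qwinv x - z • J (Qwinv x)) + (z - w) • J (Qwinv x) := by module
    have h : Qzinv x = Qwinv x + (z - w) • Qzinv (J (Qwinv x)) := by
      conv_lhs => rw [← hw1' x]
      rw [expand, map_add, map_smul, hz2']
    rw [h, hJQz]
    module
  -- z•Qzinv - w•Qwinv = (z-w)•Qzinv Qwinv
  have hzw : ∀ x : H, z • Qzinv x - w • Qwinv x = (z - w) • Qzinv (Qwinv x) := by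
    intro x
    have hA : Qzinv (Qwinv x) = Qwinv x + z • Qzinv (J (Qwinv x)) := by
      have expand : Qwinv x = (Qwinv x - z • J (Qwinv x)) + z • J (Qwinv x) := by module
      conv_lhs => rw [expand, map_add, map_smul, hz2']
    have hB : Qzinv x = Qwinv x + (z - w) • Qzinv (J (Qwinv x)) := by
      have expand : Qwinv x - w • J (Qwinv x)
          = (Qwinv x - z • J (Qwinv x)) + (z - w) • J (Qwinv x) := by module
      conv_lhs => rw [← hw1' x]
      rw [expand, map_add, map_smul, hz2']
    rw [hA, hB]; module
  -- difference identity for Nz, Nw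
  have hND : ∀ ψ : E, Nz ψ - Nw ψ
      = (w - z) • Nz (L (Qzinv (Qwinv (Lft (Nw ψ))))) := by
    intro ψ
    have h1 := hNz2 (Nw ψ) (hNwdom ψ)
    have h2 := hNw1 ψ
    have h3 : Λ (Nw ψ) = ψ - w • L (Qwinv (Lft (Nw ψ))) := by
      rw [eq_sub_iff_add_eq]; exact h2
    rw [h3] at h1
    have h4 : ψ - w • L (Qwinv (Lft (Nw ψ))) + z • L (Qzinv (Lft (Nw ψ)))
        = ψ + (z - w) • L (Qzinv (Qwinv (Lft (Nw ψ)))) := by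
      have h5 := hzw (Lft (Nw ψ))
      have h6 : z • L (Qzinv (Lft (Nw ψ))) - w • L (Qwinv (Lft (Nw ψ)))
          = (z - w) • L (Qzinv (Qwinv (Lft (Nw ψ)))) := by
        simpa [map_sub, map_smul] using congrArg L h5
      rw [← h6]; module
    rw [h4, map_add, map_smul] at h1
    rw [eq_sub_of_add_eq h1]; module
  -- the adjoints
  have hstarz : star Qzbarinv = Qzinv := by
    have h1 : star (1 - (starRingEnd ℂ z) • J) = 1 - z • J := by
      simp [star_sub, star_smul, hJsa.star_eq]
    have h2 : star Qzbarinv * (1 - z • J) = 1 := by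
      rw [← h1, ← star_mul,
        show (1 - (starRingEnd ℂ z) • J) * Qzbarinv
          = (1 - (starRingEnd ℂ z) • J).comp Qzbarinv from rfl, hzb1, star_one]
    calc star Qzbarinv = star Qzbarinv * ((1 - z • J) * Qzinv) := by
          rw [show (1 - z • J) * Qzinv = 1 from hz1, mul_one]
      _ = (star Qzbarinv * (1 - z • J)) * Qzinv := by rw [mul_assoc]
      _ = Qzinv := by rw [h2, one_mul]
  have hstarw : star Qwbarinv = Qwinv := by
    have h1 : star (1 - (starRingEnd ℂ w) • J) = 1 - w • J := by
      simp [star_sub, star_smul, hJsa.star_eq]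
    have h2 : star Qwbarinv * (1 - w • J) = 1 := by
      rw [← h1, ← star_mul,
        show (1 - (starRingEnd ℂ w) • J) * Qwbarinv
          = (1 - (starRingEnd ℂ w) • J).comp Qwbarinv from rfl, hwb1, star_one]
    calc star Qwbarinv = star Qwbarinv * ((1 - w • J) * Qwinv) := by
          rw [show (1 - w • J) * Qwinv = 1 from hw1, mul_one]
      _ = (star Qwbarinv * (1 - w • J)) * Qwinv := by rw [mul_assoc]
      _ = Qwinv := by rw [h2, one_mul]
  have hAdz : ContinuousLinearMap.adjoint (Qzbarinv.comp Lft) = L.comp Qzinv := by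
    rw [ContinuousLinearMap.adjoint_comp, ← ContinuousLinearMap.star_eq_adjoint, hstarz, hLdef]
  have hAdw : ContinuousLinearMap.adjoint (Qwbarinv.comp Lft) = L.comp Qwinv := by
    rw [ContinuousLinearMap.adjoint_comp, ← ContinuousLinearMap.star_eq_adjoint, hstarw, hLdef]
  rw [hAdz, hAdw]
  ext x
  simp only [ContinuousLinearMap.sub_apply, ContinuousLinearMap.comp_apply,
    ContinuousLinearMap.smul_apply, map_sub, map_smul]
  simp only [hRzp, hRwp, hJQz]
  have h1 : J (Qzinv x) - J (Qwinv x) = (z - w) • J (J (Qzinv (Qwinv x))) := by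
    simpa [map_sub, map_smul] using congrArg (fun v => J v) (hdiff x)
  have h2 := hdiff (Lft (Nw (L (Qwinv x))))
  have h3 : Qzinv (Lft (Nz (L (Qzinv x)))) - Qzinv (Lft (Nz (L (Qwinv x))))
      = (z - w) • Qzinv (Lft (Nz (L (J (Qzinv (Qwinv x)))))) := by
    simpa [map_sub, map_smul] using
      congrArg (fun v => Qzinv (Lft (Nz (L v)))) (hdiff x)
  have h4 : Qzinv (Lft (Nz (L (Qwinv x)))) - Qzinv (Lft (Nw (L (Qwinv x))))
      = (w - z) • Qzinv (Lft (Nz (L (Qzinv (Qwinv (Lft (Nw (L (Qwinv x))))))))) := by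
    simpa [map_sub, map_smul] using
      congrArg (fun v => Qzinv (Lft v)) (hND (L (Qwinv x)))
  linear_combination (norm := module) h1 - h2 - h3 - h4
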